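/- The free energy F satisfies F(h) ~ h as h → ∞, i.e. lim_{h→∞} F(h)/h = 1. -/

import Mathlib

open Filter Finset

theorem free_energy_asymptotically_linear
    (d : ℕ) (p : ℕ → ℝ) (f : ℝ → ℝ) (w : ℝ) (F : ℝ → ℝ)
    (hd : 2 ≤ d)
    (hp : ∀ i, i ≤ d → 0 ≤ p i)
    (hsum : ∑ i ∈ Finset.range (d + 1), p i = 1)
    (hpd : 0 < p d)
    (hf : ∀ x, f x = ∑ i ∈ Finset.range (d + 1), p i * x ^ i)
    (hw : w = ∑ i ∈ Finset.range (d + 1), (i : ℝ) * p i)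
    (hw1 : 1 < w)
    (hF : ∀ h : ℝ,
      Tendsto (fun n : ℕ => (d : ℝ) ^ (-(n : ℤ)) * Real.log (f^[n] (Real.exp h)))
        atTop (nhds (F h))) :
    Tendsto (fun h : ℝ => F h / h) atTop (nhds 1) := by
  have hd1 : (1:ℝ) < (d:ℝ) := by exact_mod_cast lt_of_lt_of_le one_lt_two hd
  set c : ℝ := Real.log (p d) / ((d:ℝ) - 1) with hc
  have hpd1 : p d ≤ 1 := by
    calc p d ≤ ∑ i ∈ Finset.range (d+1), p i := by
          apply Finset.single_le_sum (fun i hi => hp i (by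
            simpa using Nat.lt_succ_iff.mp (Finset.mem_range.mp hi)))
          simp
      _ = 1 := hsum
  have hlogpd : Real.log (p d) ≤ 0 := Real.log_nonpos hpd.le hpd1
  -- basic bounds on f on [1, ∞)
  have hf1 : ∀ x : ℝ, 1 ≤ x → 1 ≤ f x := by
    intro x hx
    rw [hf x, ← hsum]
    apply Finset.sum_le_sum
    intro i hi
    have hpi := hp i (Nat.lt_succ_iff.mp (Finset.mem_range.mp hi))
    nlinarith [one_le_pow₀ hx (n := i)]
  have hfub : ∀ x : ℝ, 1 ≤ x → f x ≤ x ^ d := by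
    intro x hx
    rw [hf x]
    calc ∑ i ∈ Finset.range (d+1), p i * x ^ i
        ≤ ∑ i ∈ Finset.range (d+1), p i * x ^ d := by
          apply Finset.sum_le_sum
          intro i hi
          have hpi := hp i (Nat.lt_succ_iff.mp (Finset.mem_range.mp hi))
          have := pow_le_pow_right₀ hx (Nat.lt_succ_iff.mp (Finset.mem_range.mp hi))
          nlinarith
      _ = (∑ i ∈ Finset.range (d+1), p i) * x ^ d := by rw [Finset.sum_mul]
      _ = x ^ d := by rw [hsum, one_mul]
  have hflb : ∀ x : ℝ, 0 ≤ x → p d * x ^ d ≤ f x := by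
    intro x hx
    rw [hf x]
    apply Finset.single_le_sum (f := fun i => p i * x ^ i)
    · intro i hi
      have hpi := hp i (Nat.lt_succ_iff.mp (Finset.mem_range.mp hi))
      positivity
    · simp
  -- iterated bounds
  have key : ∀ (x : ℝ), 1 ≤ x → ∀ n : ℕ,
      1 ≤ f^[n] x ∧
      (d:ℝ)^n * Real.log x + (∑ k ∈ Finset.range n, (d:ℝ)^k) * Real.log (p d)
        ≤ Real.log (f^[n] x) ∧
      Real.log (f^[n] x) ≤ (d:ℝ)^n * Real.log x := by
    intro x hx n
    induction n with
    | zero => simp [hx]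
    | succ n ih =>
      obtain ⟨h1, h2, h3⟩ := ih
      have hpos : (0:ℝ) < f^[n] x := by linarith
      rw [Function.iterate_succ_apply']
      refine ⟨hf1 _ h1, ?_, ?_⟩
      · have hlow : Real.log (p d) + (d:ℝ) * Real.log (f^[n] x)
            ≤ Real.log (f (f^[n] x)) := by
          have h4 := hflb (f^[n] x) hpos.le
          have h5 : Real.log (p d * (f^[n] x) ^ d) ≤ Real.log (f (f^[n] x)) :=
            Real.log_le_log (by positivity) h4
          rwa [Real.log_mul hpd.ne' (by positivity), Real.log_pow] at h5
        have hgeom : ∑ k ∈ Finset.range (n+1), (d:ℝ)^k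
            = (d:ℝ) * ∑ k ∈ Finset.range n, (d:ℝ)^k + 1 := geom_sum_succ
        rw [hgeom, pow_succ]
        have hd0 : (0:ℝ) ≤ (d:ℝ) := by linarith
        have hm := mul_le_mul_of_nonneg_left h2 hd0
        have hm2 : (d:ℝ)^n * (d:ℝ) * Real.log x
            + ((d:ℝ) * ∑ k ∈ Finset.range n, (d:ℝ)^k) * Real.log (p d)
            ≤ (d:ℝ) * Real.log (f^[n] x) := by
          calc _ = (d:ℝ) * ((d:ℝ)^n * Real.log x
              + (∑ k ∈ Finset.range n, (d:ℝ)^k) * Real.log (p d)) := by ring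
            _ ≤ _ := hm
        linarith
      · have hup : Real.log (f (f^[n] x)) ≤ (d:ℝ) * Real.log (f^[n] x) := by
          have h4 := hfub (f^[n] x) h1
          have h5 : Real.log (f (f^[n] x)) ≤ Real.log ((f^[n] x) ^ d) :=
            Real.log_le_log (by have := hf1 _ h1; linarith) h4
          rwa [Real.log_pow] at h5
        rw [pow_succ]
        have hd0 : (0:ℝ) ≤ (d:ℝ) := by linarith
        have hm := mul_le_mul_of_nonneg_left h3 hd0
        calc Real.log (f (f^[n] x)) ≤ (d:ℝ) * Real.log (f^[n] x) := hup
          _ ≤ (d:ℝ) * ((d:ℝ)^n * Real.log x) := hm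
          _ = (d:ℝ)^n * (d:ℝ) * Real.log x := by ring
  -- bounds on F h for h ≥ 0
  have hFub : ∀ h : ℝ, 0 ≤ h → F h ≤ h := by
    intro h hh
    have hx : (1:ℝ) ≤ Real.exp h := Real.one_le_exp hh
    refine le_of_tendsto (hF h) (Filter.Eventually.of_forall fun n => ?_)
    obtain ⟨h1, h2, h3⟩ := key (Real.exp h) hx n
    rw [Real.log_exp] at h3
    have hdn : (0:ℝ) < (d:ℝ)^n := by positivity
    have : ((d:ℝ) ^ (-(n:ℤ))) = ((d:ℝ)^n)⁻¹ := by
      rw [zpow_neg, zpow_natCast]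
    rw [this]
    calc ((d:ℝ)^n)⁻¹ * Real.log (f^[n] (Real.exp h))
        ≤ ((d:ℝ)^n)⁻¹ * ((d:ℝ)^n * h) := by
          apply mul_le_mul_of_nonneg_left h3 (by positivity)
      _ = h := by field_simp
  have hFlb : ∀ h : ℝ, 0 ≤ h → h + c ≤ F h := by
    intro h hh
    have hx : (1:ℝ) ≤ Real.exp h := Real.one_le_exp hh
    refine ge_of_tendsto (hF h) (Filter.Eventually.of_forall fun n => ?_)
    obtain ⟨h1, h2, h3⟩ := key (Real.exp h) hx n
    rw [Real.log_exp] at h2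
    have hdn : (0:ℝ) < (d:ℝ)^n := by positivity
    have hz : ((d:ℝ) ^ (-(n:ℤ))) = ((d:ℝ)^n)⁻¹ := by
      rw [zpow_neg, zpow_natCast]
    rw [hz]
    have hS : ∑ k ∈ Finset.range n, (d:ℝ)^k = ((d:ℝ)^n - 1) / ((d:ℝ) - 1) :=
      geom_sum_eq hd1.ne' n
    have hSle : (∑ k ∈ Finset.range n, (d:ℝ)^k) ≤ (d:ℝ)^n / ((d:ℝ) - 1) := by
      rw [hS]
      gcongr
      · linarith
    -- S_n * log p_d ≥ (d^n/(d-1)) * log p_d since log p_d ≤ 0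
    have hterm : ((d:ℝ)^n / ((d:ℝ) - 1)) * Real.log (p d)
        ≤ (∑ k ∈ Finset.range n, (d:ℝ)^k) * Real.log (p d) :=
      mul_le_mul_of_nonpos_right hSle hlogpd
    have : h + c = ((d:ℝ)^n)⁻¹ * ((d:ℝ)^n * h + ((d:ℝ)^n / ((d:ℝ) - 1)) * Real.log (p d)) := by
      rw [hc]; field_simp
    rw [this]
    apply mul_le_mul_of_nonneg_left _ (by positivity)
    linarith
  -- squeeze
  have hlim : Tendsto (fun h : ℝ => 1 + c / h) atTop (nhds 1) := by
    have : Tendsto (fun h : ℝ => c / h) atTop (nhds 0) :=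
      Tendsto.div_atTop tendsto_const_nhds tendsto_id
    simpa using tendsto_const_nhds.add this
  refine tendsto_of_tendsto_of_tendsto_of_le_of_le' hlim tendsto_const_nhds ?_ ?_
  · filter_upwards [eventually_gt_atTop (0:ℝ)] with h hh
    have h1 := hFlb h hh.le
    calc 1 + c / h = (h + c) / h := by field_simp
      _ ≤ F h / h := (div_le_div_iff_of_pos_right hh).mpr h1
  · filter_upwards [eventually_gt_atTop (0:ℝ)] with h hh
    exact div_le_one_of_le₀ (hFub h hh.le) hh.le
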